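/- Let c ∈ ℝ^{I×I} be symmetric nonnegative definite, p an orthogonal projection matrix in ℝ^{I×I}, and κ ∈ ℝ^{I×I} symmetric nonnegative definite. Then tr(c_{pp}^† p c κ c p) ≤ tr(κ c), where c_{pp} := p c p and † denotes the Moore–Penrose pseudoinverse. -/

import Mathlib

open Matrix

/-- `d` is the Moore–Penrose pseudoinverse of `m` (the four Penrose conditions). -/
def IsMoorePenrose {I : Type*} [Fintype I] [DecidableEq I]
    (m d : Matrix I I ℝ) : Prop :=
  m * d * m = m ∧ d * m * d = d ∧ (m * d)ᵀ = m * d ∧ (d * m)ᵀ = d * m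

lemma psd_trace_nonneg {I : Type*} [Fintype I] [DecidableEq I]
    {A : Matrix I I ℝ} (hA : A.PosSemidef) : 0 ≤ A.trace := by
  rw [Matrix.trace]
  apply Finset.sum_nonneg
  intro i _
  have := hA.dotProduct_mulVec_nonneg (Pi.single i 1)
  simpa [dotProduct, Matrix.mulVec_single, Matrix.diag, Pi.single_apply] using this

/-- Uniqueness of the Moore–Penrose pseudoinverse. -/
lemma mp_unique {I : Type*} [Fintype I] [DecidableEq I]
    {m d e : Matrix I I ℝ} (hd : IsMoorePenrose m d) (he : IsMoorePenrose m e) :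
    d = e := by
  obtain ⟨d1, d2, d3, d4⟩ := hd
  obtain ⟨e1, e2, e3, e4⟩ := he
  have h5 : mᵀ = mᵀ * (m * e)ᵀ := by
    conv_lhs => rw [← e1]
    rw [Matrix.transpose_mul]
  have h6 : mᵀ = (e * m)ᵀ * mᵀ := by
    conv_lhs => rw [← e1, Matrix.mul_assoc]
    rw [Matrix.transpose_mul]
  have hmd : m * d = m * e := by
    calc m * d = (m * d)ᵀ := d3.symm
    _ = dᵀ * mᵀ := by rw [Matrix.transpose_mul]
    _ = dᵀ * (mᵀ * (m * e)ᵀ) := by rw [← h5]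
    _ = (dᵀ * mᵀ) * (m * e)ᵀ := by rw [Matrix.mul_assoc]
    _ = (m * d)ᵀ * (m * e)ᵀ := by rw [Matrix.transpose_mul m d]
    _ = (m * d) * (m * e) := by rw [d3, e3]
    _ = (m * d * m) * e := by simp only [Matrix.mul_assoc]
    _ = m * e := by rw [d1]
  have hdm : d * m = e * m := by
    calc d * m = (d * m)ᵀ := d4.symm
    _ = mᵀ * dᵀ := by rw [Matrix.transpose_mul]
    _ = ((e * m)ᵀ * mᵀ) * dᵀ := by rw [← h6]
    _ = (e * m)ᵀ * (mᵀ * dᵀ) := by rw [Matrix.mul_assoc]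
    _ = (e * m)ᵀ * (d * m)ᵀ := by rw [← Matrix.transpose_mul d m]
    _ = (e * m) * (d * m) := by rw [e4, d4]
    _ = e * (m * d * m) := by simp only [Matrix.mul_assoc]
    _ = e * m := by rw [d1]
  calc d = d * m * d := d2.symm
  _ = e * m * d := by rw [hdm]
  _ = e * (m * d) := by rw [Matrix.mul_assoc]
  _ = e * (m * e) := by rw [hmd]
  _ = e * m * e := by rw [Matrix.mul_assoc]
  _ = e := e2

/-- Trace inequality form: for `c`, `κ` symmetric nonnegative definite, `p` an
orthogonal projection, and `c_{pp}† ` the pseudoinverse of `c_{pp} := p c p`,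
one has `tr(c_{pp}† p c κ c p) ≤ tr(κ c)`. -/
theorem stmt3 {I : Type*} [Fintype I] [DecidableEq I]
    (c p κ d : Matrix I I ℝ) (hc : c.PosSemidef) (hκ : κ.PosSemidef)
    (hp_proj : p * p = p) (hp_symm : pᵀ = p)
    (hd : IsMoorePenrose (p * c * p) d) :
    (d * p * c * κ * c * p).trace ≤ (κ * c).trace := by
  have hcs : cᵀ = c := by
    have := hc.1
    rwa [Matrix.IsHermitian, conjTranspose_eq_transpose_of_trivial] at this
  obtain ⟨m, hm⟩ : ∃ m, m = p * c * p := ⟨_, rfl⟩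
  rw [← hm] at hd
  obtain ⟨h1, h2, h3, h4⟩ := hd
  have hms : mᵀ = m := by
    rw [hm]
    simp only [Matrix.transpose_mul, hp_symm, hcs, Matrix.mul_assoc]
  have hpm : p * m = m := by
    rw [hm, ← Matrix.mul_assoc, ← Matrix.mul_assoc, hp_proj]
  have hmp : m * p = m := by
    rw [hm, Matrix.mul_assoc, hp_proj]
  -- p * d = d and d * p = d
  have hd1 : d = m * dᵀ * d := by
    calc d = d * m * d := h2.symm
    _ = (d * m)ᵀ * d := by rw [h4]
    _ = mᵀ * dᵀ * d := by rw [Matrix.transpose_mul]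
    _ = m * dᵀ * d := by rw [hms]
  have hpd : p * d = d := by
    conv_lhs => rw [hd1]
    rw [← Matrix.mul_assoc, ← Matrix.mul_assoc, hpm, ← hd1]
  have hd2 : d = d * dᵀ * m := by
    calc d = d * (m * d) := by rw [← Matrix.mul_assoc, h2]
    _ = d * (m * d)ᵀ := by rw [h3]
    _ = d * (dᵀ * mᵀ) := by rw [Matrix.transpose_mul]
    _ = d * dᵀ * m := by rw [hms, ← Matrix.mul_assoc]
  have hdp : d * p = d := by
    conv_lhs => rw [hd2]
    rw [Matrix.mul_assoc, hmp, ← hd2]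
  -- dᵀ = d (uniqueness of the Moore–Penrose inverse)
  have hdT : IsMoorePenrose m dᵀ := by
    refine ⟨?_, ?_, ?_, ?_⟩
    · simpa only [Matrix.transpose_mul, hms, ← Matrix.mul_assoc] using
        congrArg Matrix.transpose h1
    · simpa only [Matrix.transpose_mul, hms, ← Matrix.mul_assoc] using
        congrArg Matrix.transpose h2
    · calc (m * dᵀ)ᵀ = d * m := by
            rw [Matrix.transpose_mul, Matrix.transpose_transpose, hms]
      _ = (d * m)ᵀ := h4.symm
      _ = mᵀ * dᵀ := by rw [Matrix.transpose_mul]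
      _ = m * dᵀ := by rw [hms]
    · calc (dᵀ * m)ᵀ = m * d := by
            rw [Matrix.transpose_mul, Matrix.transpose_transpose, hms]
      _ = (m * d)ᵀ := h3.symm
      _ = dᵀ * mᵀ := by rw [Matrix.transpose_mul]
      _ = dᵀ * m := by rw [hms]
  have hds : dᵀ = d := mp_unique hdT ⟨h1, h2, h3, h4⟩
  -- d * c * d = d
  have hdcd : d * c * d = d := by
    calc d * c * d = (d * p) * c * (p * d) := by rw [hdp, hpd]
    _ = d * (p * c * p) * d := by simp only [Matrix.mul_assoc]
    _ = d * m * d := by rw [← hm]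
    _ = d := h2
  -- the square root of c
  open scoped MatrixOrder in set σ := CFC.sqrt c with hσ
  open scoped MatrixOrder in have hσσ : σ * σ = c := CFC.sqrt_mul_sqrt_self c hc.nonneg
  have hσs : σᵀ = σ := by
    open scoped MatrixOrder in have := (CFC.sqrt_nonneg c).posSemidef.1
    rwa [Matrix.IsHermitian, conjTranspose_eq_transpose_of_trivial] at this
  -- Q := σ d σ is a symmetric idempotent
  have hQ2 : (σ * d * σ) * (σ * d * σ) = σ * d * σ := by
    calc (σ * d * σ) * (σ * d * σ) = σ * (d * (σ * σ) * d) * σ := by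
          simp only [Matrix.mul_assoc]
    _ = σ * (d * c * d) * σ := by rw [hσσ]
    _ = σ * d * σ := by rw [hdcd, Matrix.mul_assoc]
  have hQs : (σ * d * σ)ᵀ = σ * d * σ := by
    rw [Matrix.transpose_mul, Matrix.transpose_mul, hσs, hds, Matrix.mul_assoc]
  -- 1 - Q is positive semidefinite
  have hQpsd : Matrix.PosSemidef ((1 : Matrix I I ℝ) - σ * d * σ) := by
    have hsq : (1 : Matrix I I ℝ) - σ * d * σ =
        ((1 : Matrix I I ℝ) - σ * d * σ)ᵀ * ((1 : Matrix I I ℝ) - σ * d * σ) := by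
      rw [Matrix.transpose_sub, Matrix.transpose_one, hQs]
      rw [Matrix.sub_mul, Matrix.mul_sub, Matrix.mul_sub, hQ2]
      simp
    rw [hsq, show ((1 : Matrix I I ℝ) - σ * d * σ)ᵀ = ((1 : Matrix I I ℝ) - σ * d * σ)ᴴ by
      rw [conjTranspose_eq_transpose_of_trivial]]
    exact Matrix.posSemidef_conjTranspose_mul_self _
  -- c - c d c is positive semidefinite
  have hA : Matrix.PosSemidef (c - c * d * c) := by
    have heq : c - c * d * c = σ * ((1 : Matrix I I ℝ) - σ * d * σ) * σᴴ := by
      rw [conjTranspose_eq_transpose_of_trivial, hσs]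
      rw [Matrix.mul_sub, Matrix.mul_one, Matrix.sub_mul, hσσ]
      congr 1
      calc c * d * c = (σ * σ) * d * (σ * σ) := by rw [hσσ]
      _ = σ * (σ * d * σ) * σ := by simp only [Matrix.mul_assoc]
    rw [heq]
    exact hQpsd.mul_mul_conjTranspose_same σ
  -- the trace of κ (c - c d c) is nonnegative
  open scoped MatrixOrder in set ρ := CFC.sqrt κ with hρ
  open scoped MatrixOrder in have hρρ : ρ * ρ = κ := CFC.sqrt_mul_sqrt_self κ hκ.nonneg
  have hρs : ρᵀ = ρ := by
    open scoped MatrixOrder in have := (CFC.sqrt_nonneg κ).posSemidef.1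
    rwa [Matrix.IsHermitian, conjTranspose_eq_transpose_of_trivial] at this
  have htr : 0 ≤ (κ * (c - c * d * c)).trace := by
    have hpsd : Matrix.PosSemidef (ρ * (c - c * d * c) * ρᴴ) :=
      hA.mul_mul_conjTranspose_same ρ
    have := psd_trace_nonneg hpsd
    rwa [conjTranspose_eq_transpose_of_trivial, hρs, Matrix.trace_mul_cycle, hρρ] at this
  -- conclude
  have key : (d * p * c * κ * c * p).trace = (κ * (c * d * c)).trace := by
    rw [hdp]
    rw [Matrix.trace_mul_comm]
    simp only [← Matrix.mul_assoc]
    rw [hpd, Matrix.mul_assoc, Matrix.trace_mul_comm]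
    simp only [Matrix.mul_assoc]
  rw [key]
  have hsplit : (κ * (c * d * c)).trace =
      (κ * c).trace - (κ * (c - c * d * c)).trace := by
    rw [Matrix.mul_sub, Matrix.trace_sub, Matrix.mul_assoc]
    ring
  rw [hsplit]
  linarith
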